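/- For the spray with coefficients G¹ = (y¹)²/(2x²) + y¹(y¹+y²), G² = y²(y¹+y²) on {x² > 2} ⊂ ℝ², the horizontal vector fields h₁ = ∂/∂x¹ - (y¹/x² + 2y¹+y²)∂/∂y¹ - y²∂/∂y², h₂ = ∂/∂x² - y¹∂/∂y¹ - (y¹+2y²)∂/∂y², together with v₁ = [[h₁,h₂],h₁] and v₂ = [[h₁,h₂],h₂], span the full 4-dimensional tangent space at each point with (y¹,y²) ≠ (0,0); i.e. v₁ and v₂ (which are vertical) are linearly independent at such points. -/

import Mathlib

private def e4 (i : Fin 4) : Fin 4 → ℝ := Pi.single i 1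

private lemma hasFDerivAt_coord (i : Fin 4) (p : Fin 4 → ℝ) :
    HasFDerivAt (fun q : Fin 4 → ℝ => q i)
      (ContinuousLinearMap.proj i : (Fin 4 → ℝ) →L[ℝ] ℝ) p :=
  (ContinuousLinearMap.proj i : (Fin 4 → ℝ) →L[ℝ] ℝ).hasFDerivAt

private lemma hasFDerivAt_vec4 {f0 f1 f2 f3 : (Fin 4 → ℝ) → ℝ}
    {D0 D1 D2 D3 : (Fin 4 → ℝ) →L[ℝ] ℝ} {p : Fin 4 → ℝ}
    (H0 : HasFDerivAt f0 D0 p) (H1 : HasFDerivAt f1 D1 p)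
    (H2 : HasFDerivAt f2 D2 p) (H3 : HasFDerivAt f3 D3 p) :
    HasFDerivAt (fun q => ![f0 q, f1 q, f2 q, f3 q])
      (D0.smulRight (e4 0) + D1.smulRight (e4 1)
        + D2.smulRight (e4 2) + D3.smulRight (e4 3)) p := by
  have h := (((H0.smul_const (e4 0)).add
      (H1.smul_const (e4 1))).add (H2.smul_const (e4 2))).add
      (H3.smul_const (e4 3))
  have he : (fun q => ![f0 q, f1 q, f2 q, f3 q])
      = fun q => f0 q • e4 0 + f1 q • e4 1 + f2 q • e4 2 + f3 q • e4 3 := by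
    funext q
    funext i
    fin_cases i <;> simp [e4, Pi.single_apply]
  rw [he]
  exact h

private lemma fderiv_vec4_apply {f : (Fin 4 → ℝ) → (Fin 4 → ℝ)} {f0 f1 f2 f3 : (Fin 4 → ℝ) → ℝ}
    {D0 D1 D2 D3 : (Fin 4 → ℝ) →L[ℝ] ℝ} {p : Fin 4 → ℝ}
    (hf : ∀ q, f q = ![f0 q, f1 q, f2 q, f3 q])
    (H0 : HasFDerivAt f0 D0 p) (H1 : HasFDerivAt f1 D1 p)
    (H2 : HasFDerivAt f2 D2 p) (H3 : HasFDerivAt f3 D3 p) (v : Fin 4 → ℝ) :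
    fderiv ℝ f p v = ![D0 v, D1 v, D2 v, D3 v] := by
  have hfe : f = fun q => ![f0 q, f1 q, f2 q, f3 q] := funext hf
  subst hfe
  rw [(hasFDerivAt_vec4 H0 H1 H2 H3).fderiv]
  funext i
  fin_cases i <;>
    simp [e4, Pi.single_apply]



/-- Lie bracket of vector fields on `ℝ⁴ = Fin 4 → ℝ`. -/
noncomputable def lie (V W : (Fin 4 → ℝ) → (Fin 4 → ℝ)) : (Fin 4 → ℝ) → (Fin 4 → ℝ) :=
  fun p => fderiv ℝ W p (V p) - fderiv ℝ V p (W p)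

private noncomputable def Lf : (Fin 4 → ℝ) → (Fin 4 → ℝ) := fun q =>
  ![0, 0, -(q 2 * (q 1)⁻¹ * (q 1)⁻¹ + q 2 + q 3), q 2 * (q 1)⁻¹ + q 2 + q 3]

private lemma lie_step1 {h₁ h₂ : (Fin 4 → ℝ) → (Fin 4 → ℝ)}
    (hh₁ : ∀ p, h₁ p = ![1, 0, -(p 2 / p 1 + 2 * p 2 + p 3), -(p 3)])
    (hh₂ : ∀ p, h₂ p = ![0, 1, -(p 2), -(p 2 + 2 * p 3)])
    (p : Fin 4 → ℝ) (hp : p 1 ≠ 0) : lie h₁ h₂ p = Lf p := by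
  have hf1 : ∀ q, h₁ q = ![1, 0, -(q 2 * (q 1)⁻¹ + 2 * q 2 + q 3), -(q 3)] := by
    intro q; rw [hh₁ q, div_eq_mul_inv]
  have Hinv : HasFDerivAt (fun q : Fin 4 → ℝ => (q 1)⁻¹)
      ((-ContinuousLinearMap.mulLeftRight ℝ ℝ (p 1)⁻¹ (p 1)⁻¹).comp
        (ContinuousLinearMap.proj 1)) p :=
    (hasFDerivAt_inv' hp).comp p (hasFDerivAt_coord 1 p)
  -- derivative of h₁
  have Hc1 : HasFDerivAt (fun _ : Fin 4 → ℝ => (1:ℝ)) (0 : (Fin 4 → ℝ) →L[ℝ] ℝ) p :=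
    hasFDerivAt_const 1 p
  have Hc0 : HasFDerivAt (fun _ : Fin 4 → ℝ => (0:ℝ)) (0 : (Fin 4 → ℝ) →L[ℝ] ℝ) p :=
    hasFDerivAt_const 0 p
  have H12 := ((((hasFDerivAt_coord 2 p).mul Hinv).add
      ((hasFDerivAt_coord 2 p).const_mul 2)).add (hasFDerivAt_coord 3 p)).neg
  have H13 := (hasFDerivAt_coord 3 p).neg
  -- derivative of h₂
  have H22 := (hasFDerivAt_coord 2 p).neg
  have H23 := ((hasFDerivAt_coord 2 p).add ((hasFDerivAt_coord 3 p).const_mul 2)).neg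
  have E2 := fderiv_vec4_apply hh₂ Hc0 Hc1 H22 H23 (h₁ p)
  have E1 := fderiv_vec4_apply hf1 Hc1 Hc0 H12 H13 (h₂ p)
  simp only [lie]
  rw [E1, E2, hf1 p, hh₂ p]
  funext i
  fin_cases i <;> (simp [Lf]; try field_simp; try ring)

private noncomputable def W1 : (Fin 4 → ℝ) → (Fin 4 → ℝ) := fun p =>
  ![0, 0, -(p 2 * (p 1)⁻¹) - p 2 + p 3 * (p 1)⁻¹ - p 3 * (p 1)⁻¹ * (p 1)⁻¹ - p 3,
     p 2 * (p 1)⁻¹ * (p 1)⁻¹ + 2 * (p 2 * (p 1)⁻¹) + p 2 + p 3 * (p 1)⁻¹ + p 3]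

private noncomputable def W2 : (Fin 4 → ℝ) → (Fin 4 → ℝ) := fun p =>
  ![0, 0, -(2 * (p 2 * (p 1)⁻¹ * (p 1)⁻¹ * (p 1)⁻¹)) - p 2 - p 3,
     2 * (p 2 * (p 1)⁻¹ * (p 1)⁻¹) - p 2 * (p 1)⁻¹ + p 2 + p 3]

set_option maxHeartbeats 1000000 in
private lemma lie_step2 {h₁ h₂ : (Fin 4 → ℝ) → (Fin 4 → ℝ)}
    (hh₁ : ∀ p, h₁ p = ![1, 0, -(p 2 / p 1 + 2 * p 2 + p 3), -(p 3)])
    (hh₂ : ∀ p, h₂ p = ![0, 1, -(p 2), -(p 2 + 2 * p 3)])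
    (p : Fin 4 → ℝ) (hp : p 1 ≠ 0) :
    lie (lie h₁ h₂) h₁ p = W1 p ∧ lie (lie h₁ h₂) h₂ p = W2 p := by
  have hf1 : ∀ q, h₁ q = ![1, 0, -(q 2 * (q 1)⁻¹ + 2 * q 2 + q 3), -(q 3)] := by
    intro q; rw [hh₁ q, div_eq_mul_inv]
  have hfL : ∀ q, Lf q = ![0, 0, -(q 2 * (q 1)⁻¹ * (q 1)⁻¹ + q 2 + q 3),
      q 2 * (q 1)⁻¹ + q 2 + q 3] := fun q => rfl
  have Hinv : HasFDerivAt (fun q : Fin 4 → ℝ => (q 1)⁻¹)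
      ((-ContinuousLinearMap.mulLeftRight ℝ ℝ (p 1)⁻¹ (p 1)⁻¹).comp
        (ContinuousLinearMap.proj 1)) p :=
    (hasFDerivAt_inv' hp).comp p (hasFDerivAt_coord 1 p)
  have Hc1 : HasFDerivAt (fun _ : Fin 4 → ℝ => (1:ℝ)) (0 : (Fin 4 → ℝ) →L[ℝ] ℝ) p :=
    hasFDerivAt_const 1 p
  have Hc0 : HasFDerivAt (fun _ : Fin 4 → ℝ => (0:ℝ)) (0 : (Fin 4 → ℝ) →L[ℝ] ℝ) p :=
    hasFDerivAt_const 0 p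
  have H12 := ((((hasFDerivAt_coord 2 p).mul Hinv).add
      ((hasFDerivAt_coord 2 p).const_mul 2)).add (hasFDerivAt_coord 3 p)).neg
  have H13 := (hasFDerivAt_coord 3 p).neg
  have H22 := (hasFDerivAt_coord 2 p).neg
  have H23 := ((hasFDerivAt_coord 2 p).add ((hasFDerivAt_coord 3 p).const_mul 2)).neg
  have HL2 := (((((hasFDerivAt_coord 2 p).mul Hinv).mul Hinv).add
      (hasFDerivAt_coord 2 p)).add (hasFDerivAt_coord 3 p)).neg
  have HL3 := (((hasFDerivAt_coord 2 p).mul Hinv).add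
      (hasFDerivAt_coord 2 p)).add (hasFDerivAt_coord 3 p)
  have hev : fderiv ℝ (lie h₁ h₂) p = fderiv ℝ Lf p :=
    Filter.EventuallyEq.fderiv_eq
      (((continuous_apply (1 : Fin 4)).continuousAt.eventually_ne hp).mono
        (fun q hq => lie_step1 hh₁ hh₂ q hq))
  have EL := fun v => fderiv_vec4_apply hfL Hc0 Hc0 HL2 HL3 v
  have E1 := fderiv_vec4_apply hf1 Hc1 Hc0 H12 H13 (Lf p)
  have E2 := fderiv_vec4_apply hh₂ Hc0 Hc1 H22 H23 (Lf p)
  refine ⟨?_, ?_⟩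
  · show fderiv ℝ h₁ p (lie h₁ h₂ p) - fderiv ℝ (lie h₁ h₂) p (h₁ p) = W1 p
    rw [lie_step1 hh₁ hh₂ p hp, hev, E1, EL (h₁ p), hf1 p, hfL p]
    funext i
    fin_cases i <;>
      (simp only [ContinuousLinearMap.neg_apply, ContinuousLinearMap.add_apply,
        ContinuousLinearMap.coe_smul', Pi.smul_apply, ContinuousLinearMap.comp_apply,
        ContinuousLinearMap.proj_apply, ContinuousLinearMap.mulLeftRight_apply,
        ContinuousLinearMap.zero_apply, smul_eq_mul, Pi.sub_apply, W1,
        Matrix.cons_val_zero, Matrix.cons_val_one, Matrix.head_cons,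
        Matrix.cons_val_two, Matrix.tail_cons, Matrix.cons_val_three];
       try simp;
       try field_simp;
       try ring)
  · show fderiv ℝ h₂ p (lie h₁ h₂ p) - fderiv ℝ (lie h₁ h₂) p (h₂ p) = W2 p
    rw [lie_step1 hh₁ hh₂ p hp, hev, E2, EL (h₂ p), hh₂ p, hfL p]
    funext i
    fin_cases i <;>
      (simp only [ContinuousLinearMap.neg_apply, ContinuousLinearMap.add_apply,
        ContinuousLinearMap.coe_smul', Pi.smul_apply, ContinuousLinearMap.comp_apply,
        ContinuousLinearMap.proj_apply, ContinuousLinearMap.mulLeftRight_apply,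
        ContinuousLinearMap.zero_apply, smul_eq_mul, Pi.sub_apply, W2,
        Matrix.cons_val_zero, Matrix.cons_val_one, Matrix.head_cons,
        Matrix.cons_val_two, Matrix.tail_cons, Matrix.cons_val_three];
       try simp;
       try field_simp;
       try ring)

private lemma quad_pos {s a b : ℝ} (hs : 2 < s) (hab : ¬(a = 0 ∧ b = 0)) :
    0 < (2*s+4*s^2+2*s^5)*a^2 + (5*s^3-3*s^4+4*s^5)*(a*b) + (2*s^5-s^4)*b^2 := by
  have hs0 : 0 < s := by linarith
  have hα : 0 < 2*s+4*s^2+2*s^5 := by positivity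
  have hγ : 0 < 2*s^5-s^4 := by nlinarith [pow_pos hs0 4]
  have hg : 0 < 16*s^4-49*s^3+62*s^2-25*s-8 := by nlinarith [sq_nonneg (s-2), sq_nonneg ((s-2)^2), pow_pos (show (0:ℝ) < s-2 by linarith) 3]
  have hΔ : (5*s^3-3*s^4+4*s^5)^2 < 4*((2*s+4*s^2+2*s^5)*(2*s^5-s^4)) := by
    nlinarith [mul_pos (pow_pos hs0 5) hg]
  rcases eq_or_ne b 0 with hb | hb
  · subst hb
    have ha : a ≠ 0 := by tauto
    have : 0 < a^2 := by positivity
    nlinarith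
  · have hb2 : 0 < b^2 := by positivity
    nlinarith [sq_nonneg (2*(2*s+4*s^2+2*s^5)*a + (5*s^3-3*s^4+4*s^5)*b), mul_pos hα hb2]

/-- For the non-flat deformed spray on `{x² > 2}`, the horizontal fields `h₁, h₂` and
the iterated brackets `v₁ = [[h₁,h₂],h₁]`, `v₂ = [[h₁,h₂],h₂]` span the whole
4-dimensional tangent space at every point with `(y¹,y²) ≠ (0,0)`. -/
theorem stmt19 (h₁ h₂ : (Fin 4 → ℝ) → (Fin 4 → ℝ))
    (hh₁ : ∀ p, h₁ p = ![1, 0, -(p 2 / p 1 + 2 * p 2 + p 3), -(p 3)])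
    (hh₂ : ∀ p, h₂ p = ![0, 1, -(p 2), -(p 2 + 2 * p 3)]) :
    ∀ p : Fin 4 → ℝ, p 1 > 2 → ¬(p 2 = 0 ∧ p 3 = 0) →
      Submodule.span ℝ
          {h₁ p, h₂ p, lie (lie h₁ h₂) h₁ p, lie (lie h₁ h₂) h₂ p} = ⊤ := by
  intro p hp1 hab
  have hp : p 1 ≠ 0 := by intro h; rw [h] at hp1; norm_num at hp1
  obtain ⟨hw1, hw2⟩ := lie_step2 hh₁ hh₂ p hp
  have hW1 : W1 p = ![0, 0,
      -(p 2 * (p 1)⁻¹) - p 2 + p 3 * (p 1)⁻¹ - p 3 * (p 1)⁻¹ * (p 1)⁻¹ - p 3,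
      p 2 * (p 1)⁻¹ * (p 1)⁻¹ + 2 * (p 2 * (p 1)⁻¹) + p 2 + p 3 * (p 1)⁻¹ + p 3] := rfl
  have hW2 : W2 p = ![0, 0,
      -(2 * (p 2 * (p 1)⁻¹ * (p 1)⁻¹ * (p 1)⁻¹)) - p 2 - p 3,
      2 * (p 2 * (p 1)⁻¹ * (p 1)⁻¹) - p 2 * (p 1)⁻¹ + p 2 + p 3] := rfl
  rw [hw1, hw2, hW1, hW2, hh₁ p, hh₂ p]
  set s := p 1 with hs'
  set a := p 2 with ha'
  set b := p 3 with hb'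
  set A1 : ℝ := -(a * s⁻¹) - a + b * s⁻¹ - b * s⁻¹ * s⁻¹ - b with hA1
  set B1 : ℝ := a * s⁻¹ * s⁻¹ + 2 * (a * s⁻¹) + a + b * s⁻¹ + b with hB1
  set A2 : ℝ := -(2 * (a * s⁻¹ * s⁻¹ * s⁻¹)) - a - b with hA2
  set B2 : ℝ := 2 * (a * s⁻¹ * s⁻¹) - a * s⁻¹ + a + b with hB2
  set M : Matrix (Fin 4) (Fin 4) ℝ :=
    ![![1, 0, -(a / s + 2 * a + b), -b], ![0, 1, -a, -(a + 2 * b)],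
      ![0, 0, A1, B1], ![0, 0, A2, B2]] with hM
  have hr : ({![1, 0, -(a / s + 2 * a + b), -b], ![0, 1, -a, -(a + 2 * b)],
      ![0, 0, A1, B1], ![0, 0, A2, B2]} : Set (Fin 4 → ℝ)) = Set.range M := by
    ext x
    simp only [hM, Matrix.range_cons, Matrix.range_empty, Set.union_empty,
      Set.mem_insert_iff, Set.mem_union, Set.mem_singleton_iff]
    try tauto
  have hdet : M.det = A1 * B2 - B1 * A2 := by
    simp only [Matrix.det_succ_row_zero, Fin.sum_univ_succ, Fin.sum_univ_zero, Matrix.det_fin_zero]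
    simp [hM, Matrix.submatrix, Fin.succAbove]
    try ring
  have h6 : s ^ 6 * (A1 * B2 - B1 * A2) =
      (2*s+4*s^2+2*s^5)*a^2 + (5*s^3-3*s^4+4*s^5)*(a*b) + (2*s^5-s^4)*b^2 := by
    rw [hA1, hB1, hA2, hB2]
    field_simp
    ring
  have hq := quad_pos hp1 hab
  have hdet0 : M.det ≠ 0 := by
    rw [hdet]
    intro h0
    rw [h0, mul_zero] at h6
    linarith
  have hu : IsUnit M := (Matrix.isUnit_iff_isUnit_det M).mpr (isUnit_iff_ne_zero.mpr hdet0)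
  rw [hr, show Set.range M = Set.range M.row from rfl, ← range_vecMulLinear, LinearMap.range_eq_top]
  exact Matrix.vecMul_surjective_iff_isUnit.mpr hu
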